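/- arXiv:1111.5562 — 7 statements merged into one kernel-verified Lean document; each statement's English description precedes it below -/
import Mathlib

section
/- Let (A,G,α) be a dynamical system with A a commutative unital topological algebra over ℂ. Suppose there exists a family (π_j,V_j)_{j∈J} of continuous representations of G on topological ℂ-vector spaces which separates the points of G and such that the evaluation map ev^j_χ : Γ_A V_j → V_j is surjective for every j ∈ J and every χ ∈ Γ_A. Then the induced action σ : Γ_A × G → Γ_A, (χ,g) ↦ χ ∘ α(g), is free; that is, if χ ∘ α(g) = χ for some χ ∈ Γ_A, then g = 1_G. -/
open TensorProduct

section TensorEval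

variable {R A V : Type*} [CommSemiring R] [AddCommMonoid A] [Module R A]
  [AddCommMonoid V] [Module R V]

/-- The map `a ⊗ v ↦ φ a • v`; for `φ = χ` a character this is the paper's `ev_χ`. -/
def tensorEval (φ : A →ₗ[R] R) : A ⊗[R] V →ₗ[R] V :=
  (TensorProduct.lid R V).toLinearMap ∘ₗ map φ LinearMap.id

theorem tensorEval_comp_map_id_left (φ : A →ₗ[R] R) (T : V →ₗ[R] V) :
    tensorEval φ ∘ₗ map LinearMap.id T = T ∘ₗ tensorEval φ :=
  ext' fun a v => by simp [tensorEval]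

theorem tensorEval_comp_map_left_of_comp_eq (φ : A →ₗ[R] R) {f : A →ₗ[R] A}
    (hf : φ ∘ₗ f = φ) :
    tensorEval φ ∘ₗ map f (LinearMap.id : V →ₗ[R] V) = tensorEval φ := by
  rw [tensorEval, LinearMap.comp_assoc, ← map_comp, hf, LinearMap.id_comp]

/-- Evaluating an `s` with `(f ⊗ 1) s = (1 ⊗ T) s` at an `f`-invariant `φ` gives a
`T`-fixed vector. -/
theorem eq_id_of_forall_exists_tensorEval_eq (φ : A →ₗ[R] R) {f : A →ₗ[R] A}
    (hf : φ ∘ₗ f = φ) (T : V →ₗ[R] V)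
    (hsurj : ∀ v : V, ∃ s : A ⊗[R] V,
      map f LinearMap.id s = map LinearMap.id T s ∧ tensorEval φ s = v) :
    T = LinearMap.id := by
  ext v
  obtain ⟨s, hs, rfl⟩ := hsurj v
  calc T (tensorEval φ s)
      = (tensorEval φ ∘ₗ map LinearMap.id T) s := by rw [tensorEval_comp_map_id_left]; rfl
    _ = (tensorEval φ ∘ₗ map f LinearMap.id) s := by
        rw [LinearMap.comp_apply, LinearMap.comp_apply, hs]
    _ = tensorEval φ s := by rw [tensorEval_comp_map_left_of_comp_eq φ hf]

end TensorEval

theorem freeness_of_induced_action_general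
    {A : Type*} [CommRing A] [Algebra ℂ A]
    {G : Type*} [Group G]
    (α : G →* (A ≃ₐ[ℂ] A))
    {J : Type*} (V : J → Type*)
    [∀ j, AddCommGroup (V j)] [∀ j, Module ℂ (V j)]
    (π : ∀ j, G →* (V j ≃ₗ[ℂ] V j))
    (hsep : ∀ g : G, g ≠ 1 → ∃ j, π j g ≠ 1)
    (hsurj : ∀ (j : J) (χ : A →ₐ[ℂ] ℂ) (v : V j),
      ∃ s : A ⊗[ℂ] V j,
        (∀ g : G, TensorProduct.map (α g).toLinearMap LinearMap.id s
            = TensorProduct.map LinearMap.id ((π j g⁻¹) : V j →ₗ[ℂ] V j) s) ∧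
        ((TensorProduct.lid ℂ (V j)).toLinearMap.comp
            (TensorProduct.map χ.toLinearMap LinearMap.id)) s = v) :
    ∀ (χ : A →ₐ[ℂ] ℂ) (g : G), χ.comp (α g).toAlgHom = χ → g = 1 := by
  intro χ g hχ
  by_contra hg
  obtain ⟨j, hj⟩ := hsep g hg
  have hfix : ((π j g⁻¹ : V j ≃ₗ[ℂ] V j) : V j →ₗ[ℂ] V j) = LinearMap.id :=
    eq_id_of_forall_exists_tensorEval_eq χ.toLinearMap (congrArg AlgHom.toLinearMap hχ) _
      fun v => (hsurj j χ v).imp fun _ hs => ⟨hs.1 g, hs.2⟩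
  apply hj
  rw [← inv_inv g, map_inv, inv_eq_one]
  exact LinearEquiv.toLinearMap_injective hfix

/-- **Freeness of the induced action** (Theorem 3.9 of the paper).
If `(A, G, α)` is a dynamical system with `A` a commutative unital topological `ℂ`-algebra,
and there is a family of continuous point-separating representations of `G` such that all
evaluation maps on the generalized spaces of sections are surjective, then the induced
action of `G` on the spectrum of `A` is free. -/
theorem freeness_of_induced_action
    {A : Type*} [CommRing A] [Algebra ℂ A] [TopologicalSpace A] [IsTopologicalRing A]
    {G : Type*} [Group G] [TopologicalSpace G] [IsTopologicalGroup G]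
    (α : G →* (A ≃ₐ[ℂ] A))
    (hα : Continuous fun p : G × A => α p.1 p.2)
    {J : Type*} (V : J → Type*)
    [∀ j, AddCommGroup (V j)] [∀ j, Module ℂ (V j)]
    [∀ j, TopologicalSpace (V j)] [∀ j, IsTopologicalAddGroup (V j)]
    [∀ j, ContinuousSMul ℂ (V j)]
    (π : ∀ j, G →* (V j ≃ₗ[ℂ] V j))
    (hπcont : ∀ j, Continuous fun p : G × V j => π j p.1 p.2)
    (hsep : ∀ g : G, g ≠ 1 → ∃ j, π j g ≠ 1)
    (hsurj : ∀ (j : J) (χ : A →ₐ[ℂ] ℂ) (v : V j),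
      ∃ s : A ⊗[ℂ] V j,
        (∀ g : G, TensorProduct.map (α g).toLinearMap LinearMap.id s
            = TensorProduct.map LinearMap.id ((π j g⁻¹) : V j →ₗ[ℂ] V j) s) ∧
        ((TensorProduct.lid ℂ (V j)).toLinearMap.comp
            (TensorProduct.map χ.toLinearMap LinearMap.id)) s = v) :
    ∀ (χ : A →ₐ[ℂ] ℂ) (g : G), χ.comp (α g).toAlgHom = χ → g = 1 :=
  freeness_of_induced_action_general α V π hsep hsurj
end

section
/- Let A be a commutative unital topological algebra over ℂ, G a compact Hausdorff abelian topological group, (A,G,α) a dynamical system, φ ∈ Ĝ a continuous character, and let a_φ be an invertible element of A lying in the isotypic component A_φ. Then the map Ψ_φ : A^G → A_φ, a ↦ a_φ·a, is a bijection from the fixed point algebra A^G onto A_φ, and it is A^G-linear (Ψ_φ(ab) = a·Ψ_φ(b) for a,b ∈ A^G); in particular A_φ is a free A^G-module of rank one. -/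
/-! Characters of semi-invariant elements multiply, so `a_φ⁻¹` is semi-invariant with character
`φ⁻¹`, and left multiplication by `a_φ⁻¹` maps `A_φ` back into `A^G`, inverting `Ψ_φ`. -/

namespace AlgHom

variable {R A : Type*} [CommSemiring R] [Semiring A] [Algebra R A] (f : A →ₐ[R] A)

theorem map_mul_eq_smul_mul {x y : A} {c d : R} (hx : f x = c • x) (hy : f y = d • y) :
    f (x * y) = (c * d) • (x * y) := by
  rw [map_mul, hx, hy, smul_mul_smul]

theorem map_units_inv_eq_smul {u : Aˣ} {c : Rˣ} (hu : f u = (c : R) • (u : A)) :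
    f ↑u⁻¹ = ((c⁻¹ : Rˣ) : R) • (↑u⁻¹ : A) :=
  have hinv_mul : (((c⁻¹ : Rˣ) : R) • (↑u⁻¹ : A)) * f u = 1 := by
    rw [hu, smul_mul_smul, Units.inv_mul, Units.inv_mul, one_smul]
  (left_inv_eq_right_inv hinv_mul (by rw [← map_mul, Units.mul_inv, map_one])).symm

end AlgHom

theorem isotypic_component_free_module_general
    {A : Type*} [CommRing A] [Algebra ℂ A]
    {G : Type*} [CommGroup G]
    (α : G →* (A ≃ₐ[ℂ] A))
    (φ : G →* ℂˣ)
    (aφ : Aˣ) (haφ : ∀ g : G, α g (aφ : A) = (φ g : ℂ) • (aφ : A)) :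
    Set.BijOn (fun a : A => (aφ : A) * a)
      {a : A | ∀ g : G, α g a = a}
      {a : A | ∀ g : G, α g a = (φ g : ℂ) • a}
    ∧ ∀ a b : A, (∀ g : G, α g a = a) → (∀ g : G, α g b = b) →
        (aφ : A) * (a * b) = a * ((aφ : A) * b) := by
  have hinv (g : G) : α g ↑aφ⁻¹ = (((φ g)⁻¹ : ℂˣ) : ℂ) • (↑aφ⁻¹ : A) :=
    (α g : A →ₐ[ℂ] A).map_units_inv_eq_smul (haφ g)
  refine ⟨Set.InvOn.bijOn (f' := fun b => ↑aφ⁻¹ * b)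
    ⟨fun a _ => aφ.inv_mul_cancel_left a, fun b _ => aφ.mul_inv_cancel_left b⟩ ?_ ?_,
    fun a b _ _ => mul_left_comm _ _ _⟩
  · intro a ha g
    have := (α g : A →ₐ[ℂ] A).map_mul_eq_smul_mul (haφ g) ((ha g).trans (one_smul ℂ a).symm)
    rwa [mul_one] at this
  · intro b hb g
    have := (α g : A →ₐ[ℂ] A).map_mul_eq_smul_mul (hinv g) (hb g)
    rwa [Units.inv_mul, one_smul] at this

/-- Proposition 5.8 of the paper: let `(A, G, α)` be a dynamical system with `A` a
commutative unital topological `ℂ`-algebra and `G` a compact Hausdorff abelian group,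
`φ` a continuous character of `G` and `a_φ` an invertible element of `A` lying in the
isotypic component `A_φ`.  Then `Ψ_φ : A^G → A_φ, a ↦ a_φ · a` is a bijection from the
fixed point algebra onto `A_φ`, and it is `A^G`-linear; in particular `A_φ` is a free
`A^G`-module of rank one. -/
theorem isotypic_component_free_module
    {A : Type*} [CommRing A] [Algebra ℂ A] [TopologicalSpace A] [IsTopologicalRing A]
    {G : Type*} [CommGroup G] [TopologicalSpace G] [IsTopologicalGroup G]
    [CompactSpace G] [T2Space G]
    (α : G →* (A ≃ₐ[ℂ] A))
    (hα : Continuous fun p : G × A => α p.1 p.2)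
    (φ : G →* ℂˣ) (hφ : Continuous fun g : G => (φ g : ℂ))
    (aφ : Aˣ) (haφ : ∀ g : G, α g (aφ : A) = (φ g : ℂ) • (aφ : A)) :
    Set.BijOn (fun a : A => (aφ : A) * a)
      {a : A | ∀ g : G, α g a = a}
      {a : A | ∀ g : G, α g a = (φ g : ℂ) • a}
    ∧ ∀ a b : A, (∀ g : G, α g a = a) → (∀ g : G, α g b = b) →
        (aφ : A) * (a * b) = a * ((aφ : A) * b) :=
  isotypic_component_free_module_general α φ aφ haφ
end

section
/- Let A be a unital topological algebra over ℂ whose underlying topological space is a topological ℂ-vector space and whose group of units A^× is open in A (for instance, a continuous inverse algebra). Then the set of all unital ℂ-algebra homomorphisms χ : A → ℂ is an equicontinuous family of maps A → ℂ; in particular, every such homomorphism is continuous. -/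
/-!
If `χ a = λ ≠ 0` then `1 - λ⁻¹ • a` lies in the kernel of `χ`, so it is not a unit. On a
balanced neighbourhood `B` of `0` on which every `1 - b` is a unit, this forces `‖χ b‖ < 1` for
every character `χ` simultaneously, and a family of linear maps that is uniformly bounded on a
neighbourhood of `0` is equicontinuous.
-/

open Filter Topology

theorem setOf_isUnit_one_sub_mem_nhds_zero {A : Type*} [Ring A] [TopologicalSpace A]
    [ContinuousSub A] (hopen : IsOpen {a : A | IsUnit a}) :
    {a : A | IsUnit (1 - a)} ∈ 𝓝 0 :=
  (hopen.preimage (continuous_const.sub continuous_id)).mem_nhds (by simp)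

theorem AlgHom.norm_apply_lt_one_of_balanced {𝕜 A : Type*} [NormedField 𝕜] [Ring A]
    [Algebra 𝕜 A] {B : Set A} (hB : Balanced 𝕜 B) (hunit : ∀ b ∈ B, IsUnit (1 - b))
    (χ : A →ₐ[𝕜] 𝕜) {b : A} (hb : b ∈ B) : ‖χ b‖ < 1 := by
  by_contra! hge
  have hχb : χ b ≠ 0 := norm_pos_iff.mp (one_pos.trans_le hge)
  have hsmul : (χ b)⁻¹ • b ∈ B :=
    hB.smul_mem (by rw [norm_inv]; exact inv_le_one_of_one_le₀ hge) hb
  refine ((hunit _ hsmul).map χ).ne_zero ?_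
  rw [map_sub, map_one, map_smul, smul_eq_mul, inv_mul_cancel₀ hχb, sub_self]

theorem equicontinuous_of_norm_lt_one_of_mem_nhds_zero {ι 𝕜 E F H : Type*}
    [NontriviallyNormedField 𝕜] [AddCommGroup E] [Module 𝕜 E] [TopologicalSpace E]
    [IsTopologicalAddGroup E] [ContinuousConstSMul 𝕜 E] [SeminormedAddCommGroup F]
    [NormedSpace 𝕜 F] [FunLike H E F] [LinearMapClass H 𝕜 E F] (f : ι → H) {B : Set E}
    (hB : B ∈ 𝓝 0) (hf : ∀ i, ∀ b ∈ B, ‖f i b‖ < 1) :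
    Equicontinuous ((↑) ∘ f) := by
  refine equicontinuous_of_equicontinuousAt_zero f
    (Metric.equicontinuousAt_iff_right.mpr fun ε hε => ?_)
  obtain ⟨c, hc₀, hcε⟩ := NormedField.exists_norm_lt 𝕜 hε
  filter_upwards [(set_smul_mem_nhds_zero_iff (norm_pos_iff.mp hc₀)).mpr hB]
  rintro _ ⟨b, hb, rfl⟩ i
  calc dist (f i 0) (f i (c • b)) = ‖c‖ * ‖f i b‖ := by
        rw [map_zero, map_smul, dist_zero_left, norm_smul]
    _ < ε := by nlinarith [hf i b hb, norm_nonneg (f i b)]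

theorem AlgHom.equicontinuous_of_isOpen_units {𝕜 A : Type*} [NontriviallyNormedField 𝕜]
    [Ring A] [Algebra 𝕜 A] [TopologicalSpace A] [IsTopologicalRing A] [ContinuousSMul 𝕜 A]
    (hopen : IsOpen {a : A | IsUnit a}) :
    Equicontinuous (fun χ : A →ₐ[𝕜] 𝕜 => (χ : A → 𝕜)) :=
  equicontinuous_of_norm_lt_one_of_mem_nhds_zero id
    (balancedCore_mem_nhds_zero (setOf_isUnit_one_sub_mem_nhds_zero hopen))
    fun χ _ hb => χ.norm_apply_lt_one_of_balanced (balancedCore_balanced _)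
      (fun _ hb' => balancedCore_subset {a : A | IsUnit (1 - a)} hb') hb

/-- Remark 7.2 (a) of the paper: if `A` is a unital topological `ℂ`-algebra whose
underlying space is a topological `ℂ`-vector space and whose group of units is open
(e.g. a continuous inverse algebra), then the set of all unital `ℂ`-algebra
homomorphisms `A → ℂ` is an equicontinuous family; in particular each such
homomorphism is continuous. -/
theorem algHoms_equicontinuous_of_isOpen_units
    {A : Type*} [Ring A] [Algebra ℂ A] [TopologicalSpace A] [IsTopologicalRing A]
    [ContinuousSMul ℂ A]
    (hopen : IsOpen {a : A | IsUnit a}) :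
    (∀ a₀ : A, ∀ ε > (0 : ℝ), ∃ W ∈ 𝓝 a₀, ∀ a ∈ W, ∀ χ : A →ₐ[ℂ] ℂ, ‖χ a - χ a₀‖ < ε)
    ∧ ∀ χ : A →ₐ[ℂ] ℂ, Continuous χ := by
  have hequi := AlgHom.equicontinuous_of_isOpen_units (𝕜 := ℂ) hopen
  refine ⟨fun a₀ ε hε => ?_, hequi.continuous⟩
  obtain ⟨W, hW, hWε⟩ := (Metric.equicontinuousAt_iff_right.mp (hequi a₀) ε hε).exists_mem
  exact ⟨W, hW, fun a ha χ => by simpa [dist_eq_norm'] using hWε a ha χ⟩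
end

section
/- Let A be a commutative unital continuous inverse algebra over ℂ, G a compact Hausdorff topological group, and (A,G,α) a dynamical system admitting a family (π_j,V_j)_{j∈J} of continuous representations of G on topological ℂ-vector spaces that separates the points of G and such that the evaluation map ev^j_χ : Γ_A V_j → V_j is surjective for every j ∈ J and every χ ∈ Γ_A. Then the induced action σ : Γ_A × G → Γ_A, (χ,g) ↦ χ ∘ α(g), is continuous and free, the map Γ_A × G → Γ_A × Γ_A, (χ,g) ↦ (χ, χ ∘ α(g)), is a proper map (so the action is proper), each orbit map G → χ·G is a homeomorphism onto the orbit with its subspace topology, and the orbit space Γ_A/G with the quotient topology is Hausdorff; that is, (Γ_A, Γ_A/G, G, σ, pr) is a topological principal bundle. -/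
open scoped Topology TensorProduct

/-- The topology of pointwise convergence on the spectrum `Γ_A = Hom_alg(A, ℂ)`. -/
noncomputable instance algHomPointwiseTopology (A : Type*) [Semiring A] [Algebra ℂ A] :
    TopologicalSpace (A →ₐ[ℂ] ℂ) :=
  TopologicalSpace.induced (fun χ : A →ₐ[ℂ] ℂ => (χ : A → ℂ)) Pi.topologicalSpace

/-!
Characters of a continuous inverse algebra are uniformly small near `0`: if `‖χ a‖ ≥ 1` for
some `a` in a balanced neighbourhood of `0` inside `{a | IsUnit (1 + a)}`, then
`1 - (χ a)⁻¹ • a` is a unit killed by `χ`. So the characters form an equicontinuous family, and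
pointwise convergence of characters upgrades to joint continuity of `(χ, a) ↦ χ a`; this makes
the action `(χ, g) ↦ χ ∘ α(g)` continuous. Freeness comes from the section spaces: for a
`G`-invariant `s ∈ A ⊗ V`, evaluating at `χ ∘ α(g)` equals `π(g⁻¹)` applied to evaluating at
`χ`, so if `χ` is fixed by `g`, then `π_j(g)` fixes every `ev_χ(s)`, which by surjectivity is all
of `V_j`. The rest is general topology of a continuous action of a compact group on a Hausdorff
space: `(χ, g) ↦ (χ, χ ∘ α(g))` is proper because its first component is, the orbit relation is
its image and hence closed, and the quotient map is open, so the orbit space is Hausdorff.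
-/

open Filter Topology

theorem Equicontinuous.continuous_uncurry_of_continuous_apply {ι X α : Type*}
    [TopologicalSpace ι] [TopologicalSpace X] [UniformSpace α] {F : ι → X → α}
    (hF : Equicontinuous F) (hcont : ∀ x, Continuous fun i => F i x) :
    Continuous fun p : ι × X => F p.1 p.2 := by
  refine continuous_iff_continuousAt.mpr fun ⟨i₀, x₀⟩ => ?_
  refine Uniform.tendsto_nhds_right.mpr fun U hU => ?_
  obtain ⟨V, hV, hVU⟩ := comp_mem_uniformity_sets hU
  have h_fst : ∀ᶠ i in 𝓝 i₀, (F i₀ x₀, F i x₀) ∈ V :=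
    Uniform.tendsto_nhds_right.mp ((hcont x₀).tendsto i₀) hV
  have h_snd : ∀ᶠ p : ι × X in 𝓝 (i₀, x₀), (F p.1 x₀, F p.1 p.2) ∈ V :=
    (continuousAt_snd.eventually (hF x₀ V hV)).mono fun p hp => hp p.1
  show ∀ᶠ p : ι × X in 𝓝 (i₀, x₀), (F i₀ x₀, F p.1 p.2) ∈ U
  filter_upwards [continuousAt_fst.eventually h_fst, h_snd] with p hp₁ hp₂
  exact hVU (SetRel.prodMk_mem_comp hp₁ hp₂)

section Characters

variable {𝕜 A : Type*} [NontriviallyNormedField 𝕜] [Ring A] [Algebra 𝕜 A] [TopologicalSpace A]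
  [IsTopologicalAddGroup A] [ContinuousSMul 𝕜 A]

theorem exists_mem_nhds_zero_forall_norm_algHom_lt_one (hopen : IsOpen {a : A | IsUnit a}) :
    ∃ W ∈ 𝓝 (0 : A), ∀ (χ : A →ₐ[𝕜] 𝕜), ∀ a ∈ W, ‖χ a‖ < 1 := by
  have hunits : (fun a : A => 1 + a) ⁻¹' {a : A | IsUnit a} ∈ 𝓝 (0 : A) :=
    (continuous_const.add continuous_id).continuousAt.preimage_mem_nhds
      (hopen.mem_nhds (by simp))
  obtain ⟨W, ⟨hW, hbal⟩, hWunits⟩ := (nhds_basis_balanced 𝕜 A).mem_iff.mp hunits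
  refine ⟨W, hW, fun χ a ha => not_le.mp fun hle => ?_⟩
  have hχa : χ a ≠ 0 := norm_pos_iff.mp (one_pos.trans_le hle)
  have hmem : (-(χ a)⁻¹) • a ∈ W :=
    hbal.smul_mem (by simpa [norm_inv] using inv_le_one_of_one_le₀ hle) ha
  apply (IsUnit.map χ (hWunits hmem)).ne_zero
  simp [hχa]

theorem equicontinuous_algHom_of_isOpen_setOf_isUnit (hopen : IsOpen {a : A | IsUnit a}) :
    Equicontinuous fun χ : A →ₐ[𝕜] 𝕜 => (χ : A → 𝕜) := by
  refine equicontinuous_of_equicontinuousAt_zero (fun χ : A →ₐ[𝕜] 𝕜 => χ) ?_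
  obtain ⟨W, hW, hlt⟩ := exists_mem_nhds_zero_forall_norm_algHom_lt_one (𝕜 := 𝕜) hopen
  refine Metric.equicontinuousAt_iff_right.mpr fun ε hε => ?_
  obtain ⟨c, hc₀, hcε⟩ := NormedField.exists_norm_lt 𝕜 hε
  filter_upwards [(set_smul_mem_nhds_zero_iff (norm_pos_iff.mp hc₀)).mpr hW]
  rintro _ ⟨w, hw, rfl⟩ χ
  calc dist ((χ : A → 𝕜) 0) (χ (c • w)) = ‖c‖ * ‖χ w‖ := by simp
    _ < ε := (mul_lt_of_lt_one_right hc₀ (hlt χ w hw)).trans hcε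

end Characters

section Spectrum

variable {A : Type*} [Semiring A] [Algebra ℂ A]

theorem isEmbedding_algHom_coe : IsEmbedding fun χ : A →ₐ[ℂ] ℂ => (χ : A → ℂ) :=
  ⟨⟨rfl⟩, DFunLike.coe_injective⟩

instance : T2Space (A →ₐ[ℂ] ℂ) := isEmbedding_algHom_coe.t2Space

theorem continuous_algHom_apply (a : A) : Continuous fun χ : A →ₐ[ℂ] ℂ => χ a :=
  (continuous_apply a).comp isEmbedding_algHom_coe.continuous

end Spectrum

theorem continuous_algHom_comp_of_isOpen_setOf_isUnit {A G : Type*} [Ring A] [Algebra ℂ A]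
    [TopologicalSpace A] [IsTopologicalAddGroup A] [ContinuousSMul ℂ A] [TopologicalSpace G]
    (hopen : IsOpen {a : A | IsUnit a}) (α : G → A ≃ₐ[ℂ] A)
    (hα : Continuous fun p : G × A => α p.1 p.2) :
    Continuous fun p : (A →ₐ[ℂ] ℂ) × G => p.1.comp (α p.2).toAlgHom := by
  refine continuous_induced_rng.mpr (continuous_pi fun a => ?_)
  have heval : Continuous fun q : (A →ₐ[ℂ] ℂ) × A => q.1 q.2 :=
    (equicontinuous_algHom_of_isOpen_setOf_isUnit hopen).continuous_uncurry_of_continuous_apply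
      continuous_algHom_apply
  exact heval.comp (continuous_fst.prodMk (hα.comp (continuous_snd.prodMk continuous_const)))

section Evaluation

variable {R A V : Type*} [CommSemiring R] [Semiring A] [Algebra R A] [AddCommMonoid V]
  [Module R V]

noncomputable def charEval (χ : A →ₐ[R] R) : A ⊗[R] V →ₗ[R] V :=
  (TensorProduct.lid R V).toLinearMap.comp (TensorProduct.map χ.toLinearMap LinearMap.id)

@[simp]
theorem charEval_tmul (χ : A →ₐ[R] R) (a : A) (v : V) : charEval χ (a ⊗ₜ v) = χ a • v := rfl

theorem charEval_comp_map (χ : A →ₐ[R] R) (φ : A →ₐ[R] A) :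
    (charEval χ).comp (TensorProduct.map φ.toLinearMap LinearMap.id) =
      (charEval (χ.comp φ) : A ⊗[R] V →ₗ[R] V) :=
  TensorProduct.ext' fun _ _ => rfl

theorem charEval_comp_map_id (χ : A →ₐ[R] R) (T : V →ₗ[R] V) :
    (charEval χ).comp (TensorProduct.map LinearMap.id T) = T.comp (charEval χ) :=
  TensorProduct.ext' fun a v => by simp

theorem charEval_comp_apply_of_map_eq {χ : A →ₐ[R] R} {φ : A →ₐ[R] A} {T : V →ₗ[R] V}
    {s : A ⊗[R] V}
    (hs : TensorProduct.map φ.toLinearMap LinearMap.id s = TensorProduct.map LinearMap.id T s) :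
    charEval (χ.comp φ) s = T (charEval χ s) := by
  rw [← charEval_comp_map, LinearMap.comp_apply, hs, ← LinearMap.comp_apply,
    charEval_comp_map_id, LinearMap.comp_apply]

end Evaluation

section FreeAction

variable {R A G : Type*} [CommSemiring R] [Semiring A] [Algebra R A] [Group G]

theorem algHom_comp_comp (α : G →* (A ≃ₐ[R] A)) (χ : A →ₐ[R] R) (g h : G) :
    (χ.comp (α g).toAlgHom).comp (α h).toAlgHom = χ.comp (α (g * h)).toAlgHom := by
  ext a
  simp [map_mul]

theorem eq_one_of_algHom_comp_eq_self {J : Type*} (α : G →* (A ≃ₐ[R] A)) (V : J → Type*)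
    [∀ j, AddCommMonoid (V j)] [∀ j, Module R (V j)] (π : ∀ j, G →* (V j ≃ₗ[R] V j))
    (hsep : ∀ g : G, g ≠ 1 → ∃ j, π j g ≠ 1)
    (hsurj : ∀ (j : J) (χ : A →ₐ[R] R) (v : V j), ∃ s : A ⊗[R] V j,
      (∀ g : G, TensorProduct.map (α g).toLinearMap LinearMap.id s
        = TensorProduct.map LinearMap.id ((π j g⁻¹) : V j →ₗ[R] V j) s) ∧ charEval χ s = v)
    {χ : A →ₐ[R] R} {g : G} (hg : χ.comp (α g).toAlgHom = χ) : g = 1 := by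
  by_contra hne
  obtain ⟨j, hj⟩ := hsep g hne
  have hfix : π j g⁻¹ = 1 := by
    ext v
    obtain ⟨s, hs, rfl⟩ := hsurj j χ v
    have hev := charEval_comp_apply_of_map_eq (χ := χ) (φ := (α g).toAlgHom) (hs g)
    rw [hg] at hev
    exact hev.symm
  exact hj (by simpa using congrArg (·⁻¹) hfix)

theorem injective_algHom_comp_of_free (α : G →* (A ≃ₐ[R] A)) (χ : A →ₐ[R] R)
    (hfree : ∀ g : G, χ.comp (α g).toAlgHom = χ → g = 1) :
    Function.Injective fun g : G => χ.comp (α g).toAlgHom := by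
  intro g h hgh
  refine mul_inv_eq_one.mp (hfree _ ?_)
  have := congrArg (fun ψ : A →ₐ[R] R => ψ.comp (α h⁻¹).toAlgHom) hgh
  simp only [algHom_comp_comp, mul_inv_cancel] at this
  rw [this]
  ext a
  simp

end FreeAction

section OrbitSpace

variable {X G : Type*} [TopologicalSpace X] {σ : X → G → X}

theorem isProperMap_prodMk_of_compactSpace [TopologicalSpace G] [CompactSpace G] [T2Space X]
    (hσ : Continuous fun p : X × G => σ p.1 p.2) :
    IsProperMap fun p : X × G => (p.1, σ p.1 p.2) :=
  isProperMap_of_comp_of_t2 (continuous_fst.prodMk hσ) continuous_fst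
    isProperMap_fst_of_compactSpace

theorem isOpenQuotientMap_quotientMk_of_rel_iff (S : Setoid X) (hσ : ∀ g, Continuous (σ · g))
    (hS : ∀ x y, S.r x y ↔ ∃ g, σ x g = y) : IsOpenQuotientMap (Quotient.mk S) := by
  refine ⟨Quotient.mk_surjective, continuous_quotient_mk', fun U hU => ?_⟩
  have hsat : Quotient.mk S ⁻¹' (Quotient.mk S '' U) = ⋃ g, (σ · g) ⁻¹' U := by
    ext x
    simp only [Set.mem_preimage, Set.mem_image, Set.mem_iUnion, Quotient.eq]
    constructor
    · rintro ⟨y, hy, hyx⟩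
      obtain ⟨g, rfl⟩ := (hS x y).mp (S.symm hyx)
      exact ⟨g, hy⟩
    · rintro ⟨g, hg⟩
      exact ⟨σ x g, hg, S.symm ((hS x _).mpr ⟨g, rfl⟩)⟩
  exact isOpen_coinduced.mpr (hsat ▸ isOpen_iUnion fun g => hU.preimage (hσ g))

theorem t2Space_quotient_of_isClosed_range (S : Setoid X) (hσ : ∀ g, Continuous (σ · g))
    (hS : ∀ x y, S.r x y ↔ ∃ g, σ x g = y)
    (hclosed : IsClosed (Set.range fun p : X × G => (p.1, σ p.1 p.2))) :
    T2Space (Quotient S) := by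
  rw [t2Space_iff_of_isOpenQuotientMap (isOpenQuotientMap_quotientMk_of_rel_iff S hσ hS)]
  convert hclosed using 1
  ext ⟨x, y⟩
  simp [Quotient.eq, hS]

end OrbitSpace

theorem topological_principal_bundle_of_free_dynamical_system_general
    {A : Type*} [CommRing A] [Algebra ℂ A] [TopologicalSpace A] [IsTopologicalRing A]
    [ContinuousSMul ℂ A]
    (hopen : IsOpen {a : A | IsUnit a})
    {G : Type*} [Group G] [TopologicalSpace G]
    [CompactSpace G]
    (α : G →* (A ≃ₐ[ℂ] A))
    (hα : Continuous fun p : G × A => α p.1 p.2)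
    {J : Type*} (V : J → Type*)
    [∀ j, AddCommGroup (V j)] [∀ j, Module ℂ (V j)]
    (π : ∀ j, G →* (V j ≃ₗ[ℂ] V j))
    (hsep : ∀ g : G, g ≠ 1 → ∃ j, π j g ≠ 1)
    (hsurj : ∀ (j : J) (χ : A →ₐ[ℂ] ℂ) (v : V j),
      ∃ s : A ⊗[ℂ] V j,
        (∀ g : G, TensorProduct.map (α g).toLinearMap LinearMap.id s
            = TensorProduct.map LinearMap.id ((π j g⁻¹) : V j →ₗ[ℂ] V j) s) ∧
        ((TensorProduct.lid ℂ (V j)).toLinearMap.comp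
            (TensorProduct.map χ.toLinearMap LinearMap.id)) s = v)
    (S : Setoid (A →ₐ[ℂ] ℂ))
    (hS : ∀ χ χ' : A →ₐ[ℂ] ℂ, S.r χ χ' ↔ ∃ g : G, χ.comp (α g).toAlgHom = χ') :
    (Continuous fun p : (A →ₐ[ℂ] ℂ) × G => p.1.comp (α p.2).toAlgHom)
    ∧ (∀ (χ : A →ₐ[ℂ] ℂ) (g : G), χ.comp (α g).toAlgHom = χ → g = 1)
    ∧ IsProperMap (fun p : (A →ₐ[ℂ] ℂ) × G => (p.1, p.1.comp (α p.2).toAlgHom))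
    ∧ (∀ χ : A →ₐ[ℂ] ℂ, Topology.IsEmbedding fun g : G => χ.comp (α g).toAlgHom)
    ∧ T2Space (Quotient S) := by
  have hσ := continuous_algHom_comp_of_isOpen_setOf_isUnit hopen α hα
  have hfree : ∀ (χ : A →ₐ[ℂ] ℂ) (g : G), χ.comp (α g).toAlgHom = χ → g = 1 :=
    fun _ _ => eq_one_of_algHom_comp_eq_self α V π hsep hsurj
  have hproper :=
    isProperMap_prodMk_of_compactSpace (σ := fun (χ : A →ₐ[ℂ] ℂ) g => χ.comp (α g).toAlgHom) hσ
  refine ⟨hσ, hfree, hproper, fun χ => ?_, ?_⟩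
  · exact ((hσ.comp (continuous_const.prodMk continuous_id)).isClosedEmbedding
      (injective_algHom_comp_of_free α χ (hfree χ))).isEmbedding
  · exact t2Space_quotient_of_isClosed_range S
      (fun g => hσ.comp (continuous_id.prodMk continuous_const)) hS
      hproper.isClosedMap.isClosed_range

/-- Theorem 7.7 of the paper: let `A` be a commutative unital continuous inverse algebra
over `ℂ` (a topological `ℂ`-vector space with continuous multiplication, open unit group
and inversion continuous at `1`), `G` a compact Hausdorff group and `(A, G, α)` a free
dynamical system, i.e. one admitting a family of continuous point-separating
representations of `G` with all evaluation maps on the generalized section spaces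
surjective.  Then the induced action `σ : Γ_A × G → Γ_A, (χ, g) ↦ χ ∘ α(g)` is
continuous and free, the map `(χ, g) ↦ (χ, χ ∘ α(g))` is proper, each orbit map
`G → χ·G` is a homeomorphism onto the orbit, and the orbit space `Γ_A / G` is Hausdorff;
that is, `(Γ_A, Γ_A/G, G, σ, pr)` is a topological principal bundle. -/
theorem topological_principal_bundle_of_free_dynamical_system
    {A : Type*} [CommRing A] [Algebra ℂ A] [TopologicalSpace A] [IsTopologicalRing A]
    [ContinuousSMul ℂ A]
    (hopen : IsOpen {a : A | IsUnit a})
    (hinv : ContinuousAt (Ring.inverse : A → A) 1)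
    {G : Type*} [Group G] [TopologicalSpace G] [IsTopologicalGroup G]
    [CompactSpace G] [T2Space G]
    (α : G →* (A ≃ₐ[ℂ] A))
    (hα : Continuous fun p : G × A => α p.1 p.2)
    {J : Type*} (V : J → Type*)
    [∀ j, AddCommGroup (V j)] [∀ j, Module ℂ (V j)]
    [∀ j, TopologicalSpace (V j)] [∀ j, IsTopologicalAddGroup (V j)]
    [∀ j, ContinuousSMul ℂ (V j)]
    (π : ∀ j, G →* (V j ≃ₗ[ℂ] V j))
    (hπcont : ∀ j, Continuous fun p : G × V j => π j p.1 p.2)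
    (hsep : ∀ g : G, g ≠ 1 → ∃ j, π j g ≠ 1)
    (hsurj : ∀ (j : J) (χ : A →ₐ[ℂ] ℂ) (v : V j),
      ∃ s : A ⊗[ℂ] V j,
        (∀ g : G, TensorProduct.map (α g).toLinearMap LinearMap.id s
            = TensorProduct.map LinearMap.id ((π j g⁻¹) : V j →ₗ[ℂ] V j) s) ∧
        ((TensorProduct.lid ℂ (V j)).toLinearMap.comp
            (TensorProduct.map χ.toLinearMap LinearMap.id)) s = v)
    (S : Setoid (A →ₐ[ℂ] ℂ))
    (hS : ∀ χ χ' : A →ₐ[ℂ] ℂ, S.r χ χ' ↔ ∃ g : G, χ.comp (α g).toAlgHom = χ') :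
    (Continuous fun p : (A →ₐ[ℂ] ℂ) × G => p.1.comp (α p.2).toAlgHom)
    ∧ (∀ (χ : A →ₐ[ℂ] ℂ) (g : G), χ.comp (α g).toAlgHom = χ → g = 1)
    ∧ IsProperMap (fun p : (A →ₐ[ℂ] ℂ) × G => (p.1, p.1.comp (α p.2).toAlgHom))
    ∧ (∀ χ : A →ₐ[ℂ] ℂ, Topology.IsEmbedding fun g : G => χ.comp (α g).toAlgHom)
    ∧ T2Space (Quotient S) :=
  topological_principal_bundle_of_free_dynamical_system_general hopen α hα V π hsep hsurj S hS
end

section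
/- Let M and N be finite-dimensional smooth manifolds (Hausdorff, second countable, without boundary) and let f : M → N be a continuous map. Then f is smooth if and only if the composition g ∘ f : M → ℝ is smooth for every smooth function g ∈ C^∞(N,ℝ). -/
/-! Multiplying the extended chart of `N` at `f x` by a smooth bump function gives a globally
smooth map `G : N → E'` that agrees with the chart near `f x`. The coordinates of `G` are smooth
real functions on `N`, so by hypothesis `G ∘ f`, which is `f` read in the chart near `x`, is
smooth. -/

open scoped Manifold Topology ContDiff

section

variable {E : Type*} [NormedAddCommGroup E] [NormedSpace ℝ E] {H : Type*} [TopologicalSpace H]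
  {I : ModelWithCorners ℝ E H} {M : Type*} [TopologicalSpace M] [ChartedSpace H M]
  {k : WithTop ℕ∞} {x : M}

theorem contMDiffAt_of_forall_clm_comp {F : Type*} [NormedAddCommGroup F] [NormedSpace ℝ F]
    [FiniteDimensional ℝ F] {f : M → F}
    (hf : ∀ ℓ : F →L[ℝ] ℝ, ContMDiffAt I 𝓘(ℝ, ℝ) k (ℓ ∘ f) x) :
    ContMDiffAt I 𝓘(ℝ, F) k f x := by
  let e := (Module.finBasis ℝ F).equivFunL
  have hef : ContMDiffAt I 𝓘(ℝ, Fin (Module.finrank ℝ F) → ℝ) k (e ∘ f) x :=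
    contMDiffAt_pi_space.2 fun i => hf ((ContinuousLinearMap.proj i).comp e.toContinuousLinearMap)
  simpa [Function.comp_def] using (e.symm.toContinuousLinearMap.contMDiff.contMDiffAt).comp x hef

theorem contMDiffAt_of_forall_contMDiff_comp {E' : Type*} [NormedAddCommGroup E']
    [NormedSpace ℝ E'] [FiniteDimensional ℝ E'] {H' : Type*} [TopologicalSpace H']
    {I' : ModelWithCorners ℝ E' H'} {N : Type*} [TopologicalSpace N] [ChartedSpace H' N]
    [T2Space N] [IsManifold I' ∞ N] {f : M → N} (hf : ContinuousAt f x)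
    (hcomp : ∀ g : N → ℝ, ContMDiff I' 𝓘(ℝ, ℝ) ∞ g → ContMDiffAt I 𝓘(ℝ, ℝ) k (g ∘ f) x) :
    ContMDiffAt I I' k f x := by
  obtain ⟨φ⟩ : Nonempty (SmoothBumpFunction I' (f x)) := inferInstance
  set G : N → E' := fun y => φ y • extChartAt I' (f x) y
  have hG : ContMDiff I' 𝓘(ℝ, E') ∞ G := φ.contMDiff_smul contMDiffOn_extChartAt
  have hGf : ContMDiffAt I 𝓘(ℝ, E') k (G ∘ f) x :=
    contMDiffAt_of_forall_clm_comp fun ℓ => hcomp _ (ℓ.contMDiff.comp hG)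
  have hchart : extChartAt I' (f x) ∘ f =ᶠ[𝓝 x] G ∘ f := by
    filter_upwards [φ.eventuallyEq_one.comp_tendsto hf] with y hy
    simp only [Function.comp_apply, Pi.one_apply] at hy
    simp [G, hy]
  exact contMDiffAt_iff_target.2 ⟨hf, hGf.congr_of_eventuallyEq hchart⟩

end

theorem smooth_iff_comp_smooth_functions_general
    {m n : ℕ}
    {M : Type*} [TopologicalSpace M] [ChartedSpace (EuclideanSpace ℝ (Fin m)) M]
    {N : Type*} [TopologicalSpace N] [ChartedSpace (EuclideanSpace ℝ (Fin n)) N]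
    [IsManifold (𝓡 n) (⊤ : ℕ∞) N] [T2Space N]
    (f : M → N) (hf : Continuous f) :
    ContMDiff (𝓡 m) (𝓡 n) (⊤ : ℕ∞) f ↔
      ∀ g : N → ℝ, ContMDiff (𝓡 n) 𝓘(ℝ, ℝ) (⊤ : ℕ∞) g → ContMDiff (𝓡 m) 𝓘(ℝ, ℝ) (⊤ : ℕ∞) (g ∘ f) :=
  ⟨fun hfs _ hg => hg.comp hfs, fun H _ =>
    contMDiffAt_of_forall_contMDiff_comp hf.continuousAt fun g hg => (H g hg).contMDiffAt⟩

/-- Lemma 2.5 of the paper: a continuous map `f : M → N` between finite-dimensional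
smooth manifolds (Hausdorff, second countable, boundaryless) is smooth if and only if
`g ∘ f : M → ℝ` is smooth for every smooth function `g ∈ C^∞(N, ℝ)`. -/
theorem smooth_iff_comp_smooth_functions
    {m n : ℕ}
    {M : Type*} [TopologicalSpace M] [ChartedSpace (EuclideanSpace ℝ (Fin m)) M]
    [IsManifold (𝓡 m) (⊤ : ℕ∞) M] [T2Space M] [SecondCountableTopology M]
    {N : Type*} [TopologicalSpace N] [ChartedSpace (EuclideanSpace ℝ (Fin n)) N]
    [IsManifold (𝓡 n) (⊤ : ℕ∞) N] [T2Space N] [SecondCountableTopology N]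
    (f : M → N) (hf : Continuous f) :
    ContMDiff (𝓡 m) (𝓡 n) (⊤ : ℕ∞) f ↔
      ∀ g : N → ℝ, ContMDiff (𝓡 n) 𝓘(ℝ, ℝ) (⊤ : ℕ∞) g → ContMDiff (𝓡 m) 𝓘(ℝ, ℝ) (⊤ : ℕ∞) (g ∘ f) :=
  smooth_iff_comp_smooth_functions_general f hf
end

section
/- Let M be a finite-dimensional smooth manifold (Hausdorff, second countable, without boundary) and let C^∞(M,ℝ) be the unital ℝ-algebra of smooth real-valued functions on M. Then every unital ℝ-algebra homomorphism χ : C^∞(M,ℝ) → ℝ is an evaluation in some point of M; that is, there exists m ∈ M such that χ(f) = f(m) for all f ∈ C^∞(M,ℝ). -/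
/-!
A character `χ` that is not an evaluation has, for every point `x`, an element of its kernel not
vanishing at `x`. Finitely many of these cover a compact sublevel set `{h ≤ χ h + 1}` of a smooth
exhaustion function `h`, so the sum of their squares plus `(h - χ h)²` is an everywhere positive
element of the kernel. Its inverse is again smooth, so it is a unit, which a character cannot kill.
-/

open scoped Manifold

/-- The unital `ℝ`-algebra `C^∞(M, ℝ)` of smooth real-valued functions on a manifold,
realized as a subalgebra of the algebra of all functions `M → ℝ`. -/
def smoothFunctionsR (n : ℕ) (M : Type*) [TopologicalSpace M]
    [ChartedSpace (EuclideanSpace ℝ (Fin n)) M] [IsManifold (𝓡 n) (⊤ : ℕ∞) M] :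
    Subalgebra ℝ (M → ℝ) where
  carrier := {f : M → ℝ | ContMDiff (𝓡 n) 𝓘(ℝ, ℝ) (⊤ : ℕ∞) f}
  mul_mem' hf hg := hf.mul hg
  add_mem' hf hg := hf.add hg
  one_mem' := contMDiff_const
  zero_mem' := contMDiff_const
  algebraMap_mem' _ := contMDiff_const

open Set
open scoped ContDiff

section ProperFunction

variable {E H M : Type*} [NormedAddCommGroup E] [NormedSpace ℝ E] [FiniteDimensional ℝ E]
  [TopologicalSpace H] (I : ModelWithCorners ℝ E H) [TopologicalSpace M] [ChartedSpace H M]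
  [IsManifold I ∞ M] [T2Space M] [SigmaCompactSpace M]

theorem exists_contMDiff_isCompact_sublevel :
    ∃ h : M → ℝ, ContMDiff I 𝓘(ℝ) ∞ h ∧ ∀ r : ℝ, IsCompact {x | h x ≤ r} := by
  have := Manifold.locallyCompact_of_finiteDimensional (M := M) I
  let K := CompactExhaustion.choice M
  -- `K.find` is locally bounded above by `K.find x + 1`, hence dominated by a smooth function.
  obtain ⟨h, hh⟩ : ∃ h : C^∞⟮I, M; 𝓘(ℝ, ℝ), ℝ⟯, ∀ x, h x ∈ Ici (K.find x : ℝ) := by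
    refine exists_contMDiffMap_forall_mem_convex_of_local_const I (fun _ ↦ convex_Ici _)
      fun x ↦ ⟨K.find x + 1, ?_⟩
    filter_upwards [isOpen_interior.mem_nhds (K.subset_interior_succ _ (K.mem_find x))]
      with y hy
    exact mem_Ici.mpr (mod_cast K.mem_iff_find_le.mp (interior_subset hy))
  refine ⟨h, h.contMDiff, fun r ↦ ?_⟩
  refine (K.isCompact ⌈r⌉₊).of_isClosed_subset
    (isClosed_le h.contMDiff.continuous continuous_const) fun x (hx : h x ≤ r) ↦ ?_
  exact K.mem_iff_find_le.mpr (Nat.cast_le.mp ((hh x).trans (hx.trans (Nat.le_ceil r))))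

end ProperFunction

namespace Subalgebra

variable {X : Type*} {A : Subalgebra ℝ (X → ℝ)}

theorem isUnit_of_forall_ne_zero (hinv : ∀ f ∈ A, (∀ x, f x ≠ 0) → f⁻¹ ∈ A) {f : A}
    (hf : ∀ x, (f : X → ℝ) x ≠ 0) : IsUnit f :=
  isUnit_iff_exists_inv.mpr
    ⟨⟨_, hinv f f.2 hf⟩, Subtype.ext <| funext fun x ↦ mul_inv_cancel₀ (hf x)⟩

theorem exists_mem_ker_apply_ne_zero (χ : A →ₐ[ℝ] ℝ) {x : X} {f : A}
    (hf : χ f ≠ (f : X → ℝ) x) :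
    ∃ g ∈ RingHom.ker χ, (g : X → ℝ) x ≠ 0 :=
  ⟨f - algebraMap ℝ A (χ f), by simp, by simpa [sub_eq_zero] using hf.symm⟩

variable [TopologicalSpace X]

theorem exists_mem_ideal_nonneg_pos_on_of_isCompact (hcont : ∀ f : A, Continuous (f : X → ℝ))
    (J : Ideal A) {K : Set X} (hK : IsCompact K) (hJ : ∀ x ∈ K, ∃ g ∈ J, (g : X → ℝ) x ≠ 0) :
    ∃ G ∈ J, ∀ x, 0 ≤ (G : X → ℝ) x ∧ (x ∈ K → 0 < (G : X → ℝ) x) := by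
  choose g hgJ hgx using hJ
  obtain ⟨t, ht⟩ := hK.elim_finite_subcover (fun y : K ↦ {x | (g y y.2 : X → ℝ) x ≠ 0})
    (fun y ↦ isOpen_ne_fun (hcont _) continuous_const)
    (fun x hx ↦ mem_iUnion.mpr ⟨⟨x, hx⟩, hgx x hx⟩)
  set G : A := ∑ y ∈ t, g y y.2 * g y y.2
  have hG x : (G : X → ℝ) x = ∑ y ∈ t, (g y y.2 : X → ℝ) x ^ 2 := by
    simp [G, sq]
  refine ⟨G, J.sum_mem fun y _ ↦ J.mul_mem_left _ (hgJ _ _), fun x ↦ ⟨?_, fun hx ↦ ?_⟩⟩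
  · exact hG x ▸ Finset.sum_nonneg fun y _ ↦ sq_nonneg _
  · obtain ⟨y, hy, hyx⟩ := mem_iUnion₂.mp (ht hx)
    exact hG x ▸ Finset.sum_pos' (fun y _ ↦ sq_nonneg _) ⟨y, hy, pow_two_pos_of_ne_zero hyx⟩

theorem exists_forall_algHom_apply_eq_eval (hcont : ∀ f : A, Continuous (f : X → ℝ))
    (hinv : ∀ f ∈ A, (∀ x, f x ≠ 0) → f⁻¹ ∈ A)
    (hproper : ∃ h : A, ∀ r : ℝ, IsCompact {x | (h : X → ℝ) x ≤ r}) (χ : A →ₐ[ℝ] ℝ) :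
    ∃ x, ∀ f : A, χ f = (f : X → ℝ) x := by
  by_contra! hχ
  obtain ⟨h, hh⟩ := hproper
  set c := χ h
  obtain ⟨G, hGχ, hG⟩ :=
    exists_mem_ideal_nonneg_pos_on_of_isCompact hcont (RingHom.ker χ) (hh (c + 1)) fun x _ ↦
      let ⟨f, hf⟩ := hχ x; exists_mem_ker_apply_ne_zero χ hf
  set F : A := (h - algebraMap ℝ A c) ^ 2 + G
  have hFχ : χ F = 0 := by simpa [F, c] using hGχ
  -- `G` is positive on the compact set `{h ≤ c + 1}`, and `(h - c) ^ 2 > 1` off it.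
  have hF x : 0 < (F : X → ℝ) x := by
    have hFx : (F : X → ℝ) x = ((h : X → ℝ) x - c) ^ 2 + (G : X → ℝ) x := by simp [F]
    rw [hFx]
    by_cases hx : (h : X → ℝ) x ≤ c + 1
    · exact add_pos_of_nonneg_of_pos (sq_nonneg _) ((hG x).2 hx)
    · nlinarith [(hG x).1]
  exact ((isUnit_of_forall_ne_zero hinv fun x ↦ (hF x).ne').map χ).ne_zero hFχ

end Subalgebra

section SmoothFunctions

variable {n : ℕ} {M : Type*} [TopologicalSpace M] [ChartedSpace (EuclideanSpace ℝ (Fin n)) M]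
  [IsManifold (𝓡 n) (⊤ : ℕ∞) M]

theorem smoothFunctionsR.continuous (f : smoothFunctionsR n M) : Continuous (f : M → ℝ) :=
  f.2.continuous

theorem smoothFunctionsR.inv_mem {f : M → ℝ} (hf : f ∈ smoothFunctionsR n M)
    (h0 : ∀ x, f x ≠ 0) :
    f⁻¹ ∈ smoothFunctionsR n M :=
  hf.inv₀ h0

theorem smoothFunctionsR.exists_isCompact_sublevel [T2Space M] [SigmaCompactSpace M] :
    ∃ h : smoothFunctionsR n M, ∀ r : ℝ, IsCompact {x | (h : M → ℝ) x ≤ r} :=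
  let ⟨h, hh, hK⟩ := exists_contMDiff_isCompact_sublevel (𝓡 n) (M := M)
  ⟨⟨h, hh⟩, hK⟩

end SmoothFunctions

/-- Theorem B.1 (b) of the paper: every unital `ℝ`-algebra homomorphism
`χ : C^∞(M, ℝ) → ℝ` on the algebra of smooth real-valued functions of a
finite-dimensional smooth manifold (Hausdorff, second countable, boundaryless)
is an evaluation in some point `m ∈ M`. -/
theorem algHom_of_smooth_functions_is_evaluation
    {n : ℕ} {M : Type*} [TopologicalSpace M]
    [ChartedSpace (EuclideanSpace ℝ (Fin n)) M] [IsManifold (𝓡 n) (⊤ : ℕ∞) M]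
    [T2Space M] [SecondCountableTopology M]
    (χ : smoothFunctionsR n M →ₐ[ℝ] ℝ) :
    ∃ m : M, ∀ f : smoothFunctionsR n M, χ f = (f : M → ℝ) m := by
  have := Manifold.locallyCompact_of_finiteDimensional (M := M) (𝓡 n)
  exact Subalgebra.exists_forall_algHom_apply_eq_eval smoothFunctionsR.continuous
    (fun _ ↦ smoothFunctionsR.inv_mem) smoothFunctionsR.exists_isCompact_sublevel χ
end

section
/- Let M be a finite-dimensional smooth manifold (Hausdorff, second countable, without boundary) and let C^∞(M,ℂ) be the unital ℂ-algebra of smooth complex-valued functions on M. Then every unital ℂ-algebra homomorphism χ : C^∞(M,ℂ) → ℂ is an evaluation in some point of M; that is, there exists m ∈ M such that χ(f) = f(m) for all f ∈ C^∞(M,ℂ). -/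
open scoped Manifold

/-!
For every `f`, the function `f - χ f` lies in the kernel of `χ`, so it is not invertible; since
the inverse of a nowhere vanishing smooth function is smooth, it has a zero. Applied to
`∑ᵢ |fᵢ - χ fᵢ|²`, this shows that the closed sets `{x | f x = χ f}` have the finite intersection
property. For a smooth exhaustion function `h`, the set `{x | h x = χ h}` is compact, so all these
sets have a common point `m`, and `χ = δ_m`.
-/

/-- The unital `ℂ`-algebra `C^∞(M, ℂ)` of smooth complex-valued functions on a real
manifold, realized as a subalgebra of the algebra of all functions `M → ℂ`. -/
def smoothFunctionsC (n : ℕ) (M : Type*) [TopologicalSpace M]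
    [ChartedSpace (EuclideanSpace ℝ (Fin n)) M] [IsManifold (𝓡 n) (⊤ : ℕ∞) M] :
    Subalgebra ℂ (M → ℂ) where
  carrier := {f : M → ℂ | ContMDiff (𝓡 n) 𝓘(ℝ, ℂ) (⊤ : ℕ∞) f}
  mul_mem' hf hg := by
    exact (contDiff_fst.mul contDiff_snd).comp_contMDiff (hf.prodMk_space hg)
  add_mem' hf hg := hf.add hg
  one_mem' := contMDiff_const
  zero_mem' := contMDiff_const
  algebraMap_mem' _ := contMDiff_const

namespace smoothFunctionsC

variable {n : ℕ} {M : Type*} [TopologicalSpace M]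
  [ChartedSpace (EuclideanSpace ℝ (Fin n)) M] [IsManifold (𝓡 n) (⊤ : ℕ∞) M]

theorem comp_mem {F : Type*} [NormedAddCommGroup F] [NormedSpace ℝ F] {φ : F → ℂ}
    (hφ : ContDiff ℝ (⊤ : ℕ∞) φ) {g : M → F} (hg : ContMDiff (𝓡 n) 𝓘(ℝ, F) (⊤ : ℕ∞) g) :
    φ ∘ g ∈ smoothFunctionsC n M :=
  hφ.comp_contMDiff hg

theorem isUnit_of_forall_ne_zero {f : smoothFunctionsC n M} (hf : ∀ x, (f : M → ℂ) x ≠ 0) :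
    IsUnit f := by
  have hinv : (fun x => ((f : M → ℂ) x)⁻¹) ∈ smoothFunctionsC n M := fun x =>
    (contDiffAt_inv ℝ (hf x)).comp_contMDiffAt (f.2 x)
  exact IsUnit.of_mul_eq_one ⟨_, hinv⟩ (Subtype.ext (funext fun x => mul_inv_cancel₀ (hf x)))

theorem exists_apply_eq (χ : smoothFunctionsC n M →ₐ[ℂ] ℂ) (f : smoothFunctionsC n M) :
    ∃ x, (f : M → ℂ) x = χ f := by
  by_contra! hf
  have hunit := (isUnit_of_forall_ne_zero (f := f - algebraMap ℂ _ (χ f))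
    fun x => sub_ne_zero.2 (hf x)).map χ
  simp [AlgHom.commutes] at hunit

def conj (f : smoothFunctionsC n M) : smoothFunctionsC n M :=
  ⟨fun x => starRingEnd ℂ ((f : M → ℂ) x), comp_mem Complex.conjCLE.contDiff f.2⟩

theorem exists_forall_apply_eq (χ : smoothFunctionsC n M →ₐ[ℂ] ℂ)
    (s : Finset (smoothFunctionsC n M)) : ∃ x, ∀ f ∈ s, (f : M → ℂ) x = χ f := by
  let d (f : smoothFunctionsC n M) := f - algebraMap ℂ _ (χ f)
  obtain ⟨x, hx⟩ := exists_apply_eq χ (∑ f ∈ s, d f * conj (d f))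
  have hsum : ∑ f ∈ s, Complex.normSq ((f : M → ℂ) x - χ f) = 0 := by
    have : χ (∑ f ∈ s, d f * conj (d f)) = 0 := by simp [d, AlgHom.commutes]
    have hterm : ∀ f, ((d f * conj (d f) : smoothFunctionsC n M) : M → ℂ) x
        = Complex.normSq ((f : M → ℂ) x - χ f) := fun f => Complex.mul_conj _
    rw [this, AddSubmonoidClass.coe_finsetSum, Finset.sum_apply] at hx
    simp only [hterm] at hx
    exact_mod_cast hx
  refine ⟨x, fun f hf => sub_eq_zero.1 (Complex.normSq_eq_zero.1 ?_)⟩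
  exact (Finset.sum_eq_zero_iff_of_nonneg fun _ _ => Complex.normSq_nonneg _).1 hsum f hf

end smoothFunctionsC

theorem exists_contMDiff_isCompact_sublevel_s16 {E : Type*} [NormedAddCommGroup E] [NormedSpace ℝ E]
    [FiniteDimensional ℝ E] {H : Type*} [TopologicalSpace H] (I : ModelWithCorners ℝ E H)
    (M : Type*) [TopologicalSpace M] [ChartedSpace H M] [IsManifold I (⊤ : ℕ∞) M] [T2Space M]
    [SigmaCompactSpace M] :
    ∃ g : M → ℝ, ContMDiff I 𝓘(ℝ) (⊤ : ℕ∞) g ∧ ∀ r : ℝ, IsCompact {x | g x ≤ r} := by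
  have : LocallyCompactSpace H := I.locallyCompactSpace
  have : LocallyCompactSpace M := ChartedSpace.locallyCompactSpace H M
  let K := CompactExhaustion.choice M
  obtain ⟨g, hg⟩ := exists_contMDiffMap_forall_mem_convex_of_local_const (n := ⊤) I
    (t := fun x => Set.Ici (K.find x : ℝ)) (fun _ => convex_Ici _) fun x =>
      ⟨K.find x + 1, Filter.mem_of_superset
        (mem_interior_iff_mem_nhds.1 (K.subset_interior_succ _ (K.mem_find x)))
        fun y hy => (mod_cast K.mem_iff_find_le.1 hy : (K.find y : ℝ) ≤ K.find x + 1)⟩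
  refine ⟨g, g.contMDiff, fun r => ?_⟩
  refine (K.isCompact ⌈r⌉₊).of_isClosed_subset
    (isClosed_le g.contMDiff.continuous continuous_const) fun x hx => ?_
  refine K.mem_iff_find_le.2 (Nat.cast_le (α := ℝ).1 ?_)
  exact ((hg x).out.trans hx).trans (Nat.le_ceil r)

/-- Corollary B.2 of the paper: every unital `ℂ`-algebra homomorphism
`χ : C^∞(M, ℂ) → ℂ` on the algebra of smooth complex-valued functions of a
finite-dimensional smooth manifold (Hausdorff, second countable, boundaryless)
is an evaluation in some point `m ∈ M`. -/
theorem algHom_of_smooth_complex_functions_is_evaluation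
    {n : ℕ} {M : Type*} [TopologicalSpace M]
    [ChartedSpace (EuclideanSpace ℝ (Fin n)) M] [IsManifold (𝓡 n) (⊤ : ℕ∞) M]
    [T2Space M] [SecondCountableTopology M]
    (χ : smoothFunctionsC n M →ₐ[ℂ] ℂ) :
    ∃ m : M, ∀ f : smoothFunctionsC n M, χ f = (f : M → ℂ) m := by
  classical
  have : LocallyCompactSpace M := ChartedSpace.locallyCompactSpace (EuclideanSpace ℝ (Fin n)) M
  obtain ⟨h, hh, hh_sublevel⟩ := exists_contMDiff_isCompact_sublevel_s16 (𝓡 n) M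
  let H : smoothFunctionsC n M := ⟨_, smoothFunctionsC.comp_mem Complex.ofRealCLM.contDiff hh⟩
  let Z (f : smoothFunctionsC n M) : Set M := {x | (f : M → ℂ) x = χ f}
  have hZ_closed (f : smoothFunctionsC n M) : IsClosed (Z f) :=
    isClosed_eq f.2.continuous continuous_const
  have hZH_compact : IsCompact (Z H) :=
    (hh_sublevel (χ H).re).of_isClosed_subset (hZ_closed H) fun x (hx : (h x : ℂ) = χ H) =>
      (congrArg Complex.re hx).le
  obtain ⟨m, -, hm⟩ := hZH_compact.inter_iInter_nonempty Z hZ_closed fun s => by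
    obtain ⟨x, hx⟩ := smoothFunctionsC.exists_forall_apply_eq χ (insert H s)
    exact ⟨x, hx H (Finset.mem_insert_self H s),
      Set.mem_iInter₂.2 fun f hf => hx f (Finset.mem_insert_of_mem hf)⟩
  exact ⟨m, fun f => (Set.mem_iInter.1 hm f).symm⟩
end
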